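/- With aligned preferences (common rankings on both sides), k ≥ 1, and graph G on n = k·n_f workers: if G contains a Hamiltonian path in which, for all i < j, every worker of block W_i = {w_{ki+1},...,w_{k(i+1)}} is visited before every worker of block W_j, then the complete locally stable matching is unique, namely μ(f_{i+1}) = W_i for all 0 ≤ i < n_f. -/

import Mathlib

private lemma lsbh_div_eq (k m b : ℕ) (hk : 0 < k) (h1 : k*b ≤ m) (h2 : m < k*b + k) :
    m / k = b := by
  have l1 : m / k < b + 1 := (Nat.div_lt_iff_lt_mul hk).mpr (by
    have e : (b+1)*k = k*b + k := by ring
    omega)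
  have l2 : b ≤ m / k := (Nat.le_div_iff_mul_le hk).mpr (by
    have e : b*k = k*b := by ring
    omega)
  omega

private lemma lsbh_div_bounds (k m : ℕ) (hk : 0 < k) : k*(m/k) ≤ m ∧ m < k*(m/k) + k := by
  constructor
  · have h := Nat.div_mul_le_self m k
    have e : m/k*k = k*(m/k) := by ring
    omega
  · have h0 : m / k < m / k + 1 := by omega
    have h := (Nat.div_lt_iff_lt_mul hk).mp h0
    have e : (m/k+1)*k = k*(m/k)+k := by ring
    omega

private lemma lsbh_card_val_lt (n c : ℕ) (hc : c ≤ n) :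
    (Finset.univ.filter (fun x : Fin n => x.1 < c)).card = c := by
  have h : (Finset.univ.filter (fun x : Fin n => x.1 < c)).card = (Finset.range c).card := by
    refine Finset.card_bij' (fun (x : Fin n) _ => x.1)
      (fun a ha => (⟨a, lt_of_lt_of_le (Finset.mem_range.mp ha) hc⟩ : Fin n))
      ?_ ?_ ?_ ?_
    · intro x hx
      simp only [Finset.mem_filter, Finset.mem_univ, true_and] at hx
      exact Finset.mem_range.mpr hx
    · intro a ha
      simp only [Finset.mem_filter, Finset.mem_univ, true_and]
      exact Finset.mem_range.mp ha
    · intro x hx; rfl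
    · intro a ha; rfl
  rw [h, Finset.card_range]

private lemma lsbh_card_block (k nf b : ℕ) (hk : 0 < k) (hb : b < nf) :
    (Finset.univ.filter (fun x : Fin (k*nf) => x.1 / k = b)).card = k := by
  have hlt : ∀ a : ℕ, a < k → k*b + a < k*nf := by
    intro a ha
    have h1 : k*(b+1) ≤ k*nf := Nat.mul_le_mul (le_refl k) hb
    have e : k*(b+1) = k*b + k := by ring
    omega
  have h : (Finset.univ.filter (fun x : Fin (k*nf) => x.1 / k = b)).card
      = (Finset.range k).card := by
    refine Finset.card_bij' (fun (x : Fin (k*nf)) _ => x.1 - k*b)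
      (fun a ha => (⟨k*b + a, hlt a (Finset.mem_range.mp ha)⟩ : Fin (k*nf)))
      ?_ ?_ ?_ ?_
    · intro x hx
      simp only [Finset.mem_filter, Finset.mem_univ, true_and] at hx
      have h1 := (lsbh_div_bounds k x.1 hk).1
      have h2 := (lsbh_div_bounds k x.1 hk).2
      rw [hx] at h1 h2
      exact Finset.mem_range.mpr (show x.1 - k*b < k by omega)
    · intro a ha
      simp only [Finset.mem_filter, Finset.mem_univ, true_and]
      have ha' := Finset.mem_range.mp ha
      exact lsbh_div_eq k (k*b+a) b hk (by omega) (by omega)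
    · intro x hx
      simp only [Finset.mem_filter, Finset.mem_univ, true_and] at hx
      have h1 := (lsbh_div_bounds k x.1 hk).1
      rw [hx] at h1
      exact Fin.ext (show k*b + (x.1 - k*b) = x.1 by omega)
    · intro a ha
      have ha' := Finset.mem_range.mp ha
      show k*b + a - k*b = a
      omega
  rw [h, Finset.card_range]

private lemma lsbh_psi_block (k nf : ℕ) (hk : 0 < k) (ψ : Fin (k*nf) ≃ Fin (k*nf))
    (hblocks : ∀ i j : Fin (k*nf), i ≤ j → (ψ i).1 / k ≤ (ψ j).1 / k)
    (p : Fin (k*nf)) : (ψ p).1 / k = p.1 / k := by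
  have hT : ∀ b : ℕ, b ≤ nf →
      (Finset.univ.filter (fun q : Fin (k*nf) => (ψ q).1 / k < b)).card = k * b := by
    intro b hb
    rw [← lsbh_card_val_lt (k*nf) (k*b) (Nat.mul_le_mul (le_refl k) hb)]
    refine Finset.card_bij' (fun (q : Fin (k*nf)) _ => ψ q) (fun x _ => ψ.symm x)
      ?_ ?_ ?_ ?_
    · intro q hq
      simp only [Finset.mem_filter, Finset.mem_univ, true_and] at hq ⊢
      have h1 := (Nat.div_lt_iff_lt_mul hk).mp hq
      have e : b*k = k*b := by ring
      omega
    · intro x hx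
      simp only [Finset.mem_filter, Finset.mem_univ, true_and] at hx ⊢
      rw [ψ.apply_symm_apply]
      apply (Nat.div_lt_iff_lt_mul hk).mpr
      have e : b*k = k*b := by ring
      omega
    · intro q hq; exact ψ.symm_apply_apply q
    · intro x hx; exact ψ.apply_symm_apply x
  have hmem : ∀ b : ℕ, b ≤ nf → ∀ q : Fin (k*nf), ((ψ q).1 / k < b ↔ q.1 < k * b) := by
    intro b hb q
    constructor
    · intro h
      have hsub : (Finset.univ.filter (fun r : Fin (k*nf) => r.1 < q.1+1)) ⊆
          (Finset.univ.filter (fun r : Fin (k*nf) => (ψ r).1 / k < b)) := by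
        intro r hr
        simp only [Finset.mem_filter, Finset.mem_univ, true_and] at hr ⊢
        have hrq : r ≤ q := Fin.le_def.mpr (by omega)
        exact lt_of_le_of_lt (hblocks r q hrq) h
      have hc := Finset.card_le_card hsub
      rw [hT b hb, lsbh_card_val_lt (k*nf) (q.1+1) q.2] at hc
      omega
    · intro h
      by_contra hc
      push_neg at hc
      have hsub : (Finset.univ.filter (fun r : Fin (k*nf) => (ψ r).1 / k < b)) ⊆
          (Finset.univ.filter (fun r : Fin (k*nf) => r.1 < q.1)) := by
        intro r hr
        simp only [Finset.mem_filter, Finset.mem_univ, true_and] at hr ⊢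
        by_contra hrq
        push_neg at hrq
        have hqr : q ≤ r := Fin.le_def.mpr hrq
        have := hblocks q r hqr
        omega
      have hc2 := Finset.card_le_card hsub
      rw [hT b hb, lsbh_card_val_lt (k*nf) q.1 (le_of_lt q.2)] at hc2
      omega
  have hnf : p.1 / k < nf := by
    apply (Nat.div_lt_iff_lt_mul hk).mpr
    have e : nf*k = k*nf := by ring
    omega
  have hub : (ψ p).1 / k < p.1/k + 1 := by
    apply (hmem (p.1/k + 1) (by omega) p).mpr
    have h2 := (lsbh_div_bounds k p.1 hk).2
    have e : k*(p.1/k+1) = k*(p.1/k)+k := by ring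
    omega
  have hlb : ¬ ((ψ p).1 / k < p.1/k) := by
    intro h
    have h1 := (hmem (p.1/k) (by omega) p).mp h
    have h2 := (lsbh_div_bounds k p.1 hk).1
    omega
  omega

/-- With aligned preferences (common rankings by index on both sides), `k ≥ 1`
positions per firm and `n = k · n_f` workers: if `G` has a Hamiltonian path
`ψ 0, ψ 1, …` visiting the blocks `W_i = {w_{ki+1},…,w_{k(i+1)}}` in order
(every worker of `W_i` is visited before every worker of `W_j` for `i < j`),
then the complete locally stable matching is unique, namely the one assigning
block `W_i` to firm `f_{i+1}` (worker `w` works at firm `⌊w/k⌋`). -/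
theorem unique_locally_stable_of_block_hamiltonian_path
    (k nf : ℕ) (hk : 0 < k) (G : SimpleGraph (Fin (k * nf)))
    (ψ : Fin (k * nf) ≃ Fin (k * nf))
    (hpath : ∀ i : Fin (k * nf), ∀ h : i.1 + 1 < k * nf,
      G.Adj (ψ i) (ψ ⟨i.1 + 1, h⟩))
    (hblocks : ∀ i j : Fin (k * nf), i ≤ j → (ψ i).1 / k ≤ (ψ j).1 / k) :
    ∀ μ : Fin (k * nf) → Fin nf,
      (∀ f : Fin nf, (Finset.univ.filter (fun w => μ w = f)).card = k) →
      ((∀ w : Fin (k * nf), ∀ f : Fin nf, f < μ w →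
          (∃ z, μ z = f ∧ (∀ y, μ y = f → y ≤ z) ∧ w < z) →
          ¬ ∃ y, G.Adj w y ∧ μ y = f) ↔
        ∀ w : Fin (k * nf), (μ w).1 = w.1 / k) := by
  intro μ hcard
  have hbounds := fun m => lsbh_div_bounds k m hk
  have hψb : ∀ p : Fin (k*nf), (ψ p).1 / k = p.1 / k := lsbh_psi_block k nf hk ψ hblocks
  have hsymmb : ∀ x : Fin (k*nf), (ψ.symm x).1 / k = x.1 / k := by
    intro x
    have h := hψb (ψ.symm x)
    rw [ψ.apply_symm_apply] at h
    exact h.symm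
  constructor
  · intro hstab
    have key : ∀ m : ℕ, ∀ hm : m < k * nf, (μ (ψ ⟨m, hm⟩)).1 = m / k := by
      intro m
      induction m using Nat.strong_induction_on with
      | _ m IH =>
      intro hm
      by_contra hbad
      have hfnf : m / k < nf := by
        apply (Nat.div_lt_iff_lt_mul hk).mpr
        have e : nf*k = k*nf := by ring
        omega
      set f : Fin nf := ⟨m / k, hfnf⟩ with hfdef
      have hfval : f.1 = m / k := rfl
      -- firms below f are full with earlier (by path position) workers
      have hfull : ∀ s : ℕ, m ≤ s → ∀ hs : s < k*nf, m/k ≤ (μ (ψ ⟨s, hs⟩)).1 := by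
        intro s hms hs
        by_contra hlt
        push_neg at hlt
        set f' : Fin nf := μ (ψ ⟨s, hs⟩) with hf'
        have hS : (Finset.univ.filter (fun p : Fin (k*nf) => p.1 / k = f'.1)).card = k :=
          lsbh_card_block k nf f'.1 hk f'.2
        have hsub : insert (ψ ⟨s, hs⟩)
            ((Finset.univ.filter (fun p : Fin (k*nf) => p.1 / k = f'.1)).image ψ)
            ⊆ Finset.univ.filter (fun w => μ w = f') := by
          intro x hx
          simp only [Finset.mem_insert, Finset.mem_image, Finset.mem_filter, Finset.mem_univ,
            true_and] at hx ⊢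
          rcases hx with rfl | ⟨p, hp, rfl⟩
          · rfl
          · have h1 : p.1 < m := by
              have l1 := (hbounds p.1).2
              have l2 := (hbounds m).1
              have l3 : k * (p.1/k + 1) ≤ k * (m/k) :=
                Nat.mul_le_mul (le_refl k) (by omega)
              have e : k*(p.1/k+1) = k*(p.1/k)+k := by ring
              omega
            have h2 := IH p.1 h1 p.2
            have h3 : ψ (⟨p.1, p.2⟩ : Fin (k*nf)) = ψ p := rfl
            rw [h3] at h2
            exact Fin.ext (by rw [h2, hp])
        have hcardle := Finset.card_le_card hsub
        rw [hcard f'] at hcardle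
        have hnotmem : ψ ⟨s, hs⟩ ∉
            (Finset.univ.filter (fun p : Fin (k*nf) => p.1 / k = f'.1)).image ψ := by
          intro hmem
          simp only [Finset.mem_image, Finset.mem_filter, Finset.mem_univ, true_and] at hmem
          obtain ⟨p, hp, hpe⟩ := hmem
          have hps : p = ⟨s, hs⟩ := ψ.injective hpe
          have hd : m / k ≤ s / k := Nat.div_le_div_right hms
          rw [hps] at hp
          simp only at hp
          omega
        rw [Finset.card_insert_of_notMem hnotmem,
          Finset.card_image_of_injective _ ψ.injective, hS] at hcardle
        omega
      -- the fiber of f and its maximum z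
      set fib := Finset.univ.filter (fun w : Fin (k*nf) => μ w = f) with hfib
      have hfibcard : fib.card = k := hcard f
      have hfibne : fib.Nonempty := Finset.card_pos.mp (by omega)
      set z := fib.max' hfibne with hz
      have hzmem := fib.max'_mem hfibne
      have hzf : μ z = f := (Finset.mem_filter.mp hzmem).2
      have hzmax : ∀ y, μ y = f → y ≤ z := fun y hy =>
        Finset.le_max' fib y (Finset.mem_filter.mpr ⟨Finset.mem_univ y, hy⟩)
      -- positions of fiber elements
      have hfibpos : ∀ x ∈ fib,
          ((ψ.symm x).1 < m ∧ (ψ.symm x).1 / k = m / k) ∨ m < (ψ.symm x).1 := by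
        intro x hx
        have hxf : μ x = f := (Finset.mem_filter.mp hx).2
        rcases lt_trichotomy (ψ.symm x).1 m with hlt | heq | hgt
        · left
          have h1 := IH (ψ.symm x).1 hlt (ψ.symm x).2
          have h2 : ψ (⟨(ψ.symm x).1, (ψ.symm x).2⟩ : Fin (k*nf)) = x := by
            have h3 : (⟨(ψ.symm x).1, (ψ.symm x).2⟩ : Fin (k*nf)) = ψ.symm x := rfl
            rw [h3, ψ.apply_symm_apply]
          rw [h2, hxf] at h1
          exact ⟨hlt, by rw [← h1]⟩
        · exfalso
          apply hbad
          have h2 : ψ (⟨m, hm⟩ : Fin (k*nf)) = x := by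
            have h3 : (⟨m, hm⟩ : Fin (k*nf)) = ψ.symm x := Fin.ext heq.symm
            rw [h3, ψ.apply_symm_apply]
          rw [h2, hxf]
        · right; exact hgt
      -- z lies in a block strictly above m/k
      have hzbig : k * (m/k) + k ≤ z.1 := by
        have hex : ∃ x ∈ fib, ¬ (x.1 / k = m / k) := by
          by_contra hall
          push_neg at hall
          have hsub : fib ⊆ Finset.univ.filter (fun x : Fin (k*nf) => x.1/k = m/k) := by
            intro x hx
            simp only [Finset.mem_filter, Finset.mem_univ, true_and]
            exact hall x hx
          have heq : fib = Finset.univ.filter (fun x : Fin (k*nf) => x.1/k = m/k) :=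
            Finset.eq_of_subset_of_card_le hsub
              (by rw [hfibcard, lsbh_card_block k nf (m/k) hk hfnf])
          have hmm : ψ ⟨m, hm⟩ ∈ Finset.univ.filter (fun x : Fin (k*nf) => x.1/k = m/k) := by
            simp only [Finset.mem_filter, Finset.mem_univ, true_and]
            exact hψb ⟨m, hm⟩
          rw [← heq] at hmm
          exact hbad (by rw [(Finset.mem_filter.mp hmm).2])
        obtain ⟨x, hxfib, hxb⟩ := hex
        have hxblk : (ψ.symm x).1 / k = x.1 / k := hsymmb x
        have hgt : m < (ψ.symm x).1 := by
          rcases hfibpos x hxfib with ⟨h1, h2⟩ | h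
          · exact absurd (by omega : x.1/k = m/k) hxb
          · exact h
        have h1 : m / k ≤ x.1 / k := by
          rw [← hxblk]
          exact Nat.div_le_div_right (le_of_lt hgt)
        have h3 : k * (m/k + 1) ≤ k * (x.1/k) := Nat.mul_le_mul (le_refl k) (by omega)
        have h4 := (hbounds x.1).1
        have h5 : x.1 ≤ z.1 := Fin.le_def.mp (Finset.le_max' fib x hxfib)
        have e : k*(m/k+1) = k*(m/k)+k := by ring
        omega
      -- the current worker prefers f
      have hμm : f < μ (ψ ⟨m, hm⟩) := by
        have h1 := hfull m le_rfl hm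
        exact Fin.lt_def.mpr (by omega)
      rcases Nat.lt_or_ge (k * (m/k)) m with hcase | hcase
      · -- m is not at the start of its block: backward neighbor is in the fiber
        have hm1 : m - 1 < k * nf := by omega
        have hprev : (μ (ψ ⟨m-1, hm1⟩)).1 = (m-1)/k := IH (m-1) (by omega) hm1
        have hprevblk : (m-1)/k = m/k := by
          apply lsbh_div_eq k (m-1) (m/k) hk (by omega)
          have := (hbounds m).2
          omega
        have hwz : ψ ⟨m, hm⟩ < z := by
          have h1 : (ψ ⟨m,hm⟩).1 / k = m/k := hψb ⟨m,hm⟩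
          have h2 := (hbounds (ψ ⟨m,hm⟩).1).2
          rw [h1] at h2
          exact Fin.lt_def.mpr (by omega)
        apply hstab (ψ ⟨m,hm⟩) f hμm ⟨z, hzf, hzmax, hwz⟩
        have h' : (m-1) + 1 < k * nf := by omega
        have hadj := hpath ⟨m-1, hm1⟩ h'
        have he : ((⟨(m-1)+1, h'⟩ : Fin (k*nf))) = ⟨m, hm⟩ :=
          Fin.ext (show (m-1)+1 = m by omega)
        rw [he] at hadj
        exact ⟨ψ ⟨m-1, hm1⟩, hadj.symm, Fin.ext (by rw [hprev, hprevblk])⟩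
      · -- m is at the start of its block
        have hmeq : m = k * (m/k) := le_antisymm hcase (hbounds m).1
        set E := Finset.univ.filter (fun p : Fin (k*nf) => m < p.1 ∧ μ (ψ p) = f) with hE
        have hEne : E.Nonempty := by
          obtain ⟨x, hxfib⟩ := hfibne
          rcases hfibpos x hxfib with ⟨h1, h2⟩ | h
          · exfalso
            have := (hbounds (ψ.symm x).1).1
            rw [h2] at this
            omega
          · refine ⟨ψ.symm x, ?_⟩
            simp only [hE, Finset.mem_filter, Finset.mem_univ, true_and]
            refine ⟨h, ?_⟩
            rw [ψ.apply_symm_apply]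
            exact (Finset.mem_filter.mp hxfib).2
        set s' := E.min' hEne with hs'
        have hs'mem := E.min'_mem hEne
        have hs'p : m < s'.1 ∧ μ (ψ s') = f := by
          have := Finset.mem_filter.mp hs'mem
          exact this.2
        -- every position in [m, s') is matched strictly above f
        have hC2 : ∀ p : Fin (k*nf), m ≤ p.1 → p.1 < s'.1 → f < μ (ψ p) := by
          intro p h1 h2
          have hge : m/k ≤ (μ (ψ p)).1 := by
            have h3 := hfull p.1 h1 p.2
            have h4 : ψ (⟨p.1, p.2⟩ : Fin (k*nf)) = ψ p := rfl
            rw [h4] at h3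
            exact h3
          have hne : (μ (ψ p)).1 ≠ m/k := by
            intro hpe
            have hpef : μ (ψ p) = f := Fin.ext hpe
            rcases eq_or_lt_of_le h1 with he | hlt
            · apply hbad
              have hpm : (⟨m, hm⟩ : Fin (k*nf)) = p := Fin.ext he
              rw [hpm, hpef]
            · have hmemE : p ∈ E :=
                Finset.mem_filter.mpr ⟨Finset.mem_univ p, hlt, hpef⟩
              have := Fin.le_def.mp (E.min'_le p hmemE)
              omega
          exact Fin.lt_def.mpr (by omega)
        have hu1 : s'.1 - 1 < k*nf := by
          have := s'.2
          omega
        set u := ψ ⟨s'.1 - 1, hu1⟩ with hudef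
        have hμu : f < μ u := hC2 ⟨s'.1-1, hu1⟩
          (show m ≤ s'.1 - 1 by have := hs'p.1; omega)
          (show s'.1 - 1 < s'.1 by have := hs'p.1; omega)
        have hadj : G.Adj u (ψ s') := by
          have h' : (s'.1 - 1) + 1 < k*nf := by have := s'.2; omega
          have hadj0 := hpath ⟨s'.1-1, hu1⟩ h'
          have he : (⟨(s'.1-1)+1, h'⟩ : Fin (k*nf)) = s' :=
            Fin.ext (show (s'.1-1)+1 = s'.1 by have := hs'p.1; omega)
          rw [he] at hadj0
          exact hadj0
        by_cases hcu : u < z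
        · exact hstab u f hμu ⟨z, hzf, hzmax, hcu⟩ ⟨ψ s', hadj, hs'p.2⟩
        · -- counting contradiction
          have hzu : z.1 < u.1 := by
            have hle : z.1 ≤ u.1 := Fin.le_def.mp (not_lt.mp hcu)
            have hne : z.1 ≠ u.1 := by
              intro he
              have : z = u := Fin.ext he
              rw [this] at hzf
              rw [hzf] at hμu
              exact lt_irrefl f hμu
            omega
          set B := (s'.1 - 1)/k with hB
          have huB : u.1/k = B := by
            rw [hudef]
            exact hψb ⟨s'.1-1, hu1⟩
          have hsub : fib ⊆ Finset.univ.filter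
              (fun x : Fin (k*nf) => s'.1 ≤ (ψ.symm x).1 ∧ (ψ.symm x).1 < k*B + k) := by
            intro x hx
            simp only [Finset.mem_filter, Finset.mem_univ, true_and]
            have hxf := (Finset.mem_filter.mp hx).2
            have hpos : m < (ψ.symm x).1 := by
              rcases hfibpos x hx with ⟨h1, h2⟩ | h
              · exfalso
                have := (hbounds (ψ.symm x).1).1
                rw [h2] at this
                omega
              · exact h
            have hmemE : ψ.symm x ∈ E := by
              refine Finset.mem_filter.mpr ⟨Finset.mem_univ _, hpos, ?_⟩
              rw [ψ.apply_symm_apply]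
              exact hxf
            have h1 : s'.1 ≤ (ψ.symm x).1 := Fin.le_def.mp (E.min'_le _ hmemE)
            have h2 : x.1 ≤ z.1 := Fin.le_def.mp (Finset.le_max' fib x hx)
            have h3 : u.1 < k*B + k := by
              have := (hbounds u.1).2
              rw [huB] at this
              exact this
            have h5 : x.1 / k ≤ B := by
              have h6 : x.1/k < B+1 := (Nat.div_lt_iff_lt_mul hk).mpr (by
                have e : (B+1)*k = k*B+k := by ring
                omega)
              omega
            have h6 : (ψ.symm x).1 / k = x.1 / k := hsymmb x
            have h7 : (ψ.symm x).1 < k*B + k := by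
              have h8 := (hbounds (ψ.symm x).1).2
              have h9 : k*((ψ.symm x).1/k) ≤ k*B := Nat.mul_le_mul (le_refl k) (by omega)
              omega
            exact ⟨h1, h7⟩
          have htarget : (Finset.univ.filter
              (fun x : Fin (k*nf) => s'.1 ≤ (ψ.symm x).1 ∧ (ψ.symm x).1 < k*B + k)).card
              ≤ (k*B + k) - s'.1 := by
            rw [← Nat.card_Ico s'.1 (k*B+k)]
            apply Finset.card_le_card_of_injOn (fun x => (ψ.symm x).1)
            · intro x hx
              simp only [Finset.coe_filter, Set.mem_setOf_eq, Finset.mem_filter, Finset.mem_univ, true_and] at hx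
              exact Finset.mem_Ico.mpr hx
            · intro x _ y _ hxy
              have : ψ.symm x = ψ.symm y := Fin.ext hxy
              exact ψ.symm.injective this
          have hfinal := Finset.card_le_card hsub
          rw [hfibcard] at hfinal
          have hs'B : k*B ≤ s'.1 - 1 := by
            have h := (hbounds (s'.1-1)).1
            rw [← hB] at h
            exact h
          have hs'pos : 1 ≤ s'.1 := by omega
          omega
    intro w
    have h1 := key (ψ.symm w).1 (ψ.symm w).2
    have h2 : ψ (⟨(ψ.symm w).1, (ψ.symm w).2⟩ : Fin (k*nf)) = w := by
      have h3 : (⟨(ψ.symm w).1, (ψ.symm w).2⟩ : Fin (k*nf)) = ψ.symm w := rfl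
      rw [h3, ψ.apply_symm_apply]
    rw [h2] at h1
    rw [h1, hsymmb w]
  · intro hμ w f hf hex
    exfalso
    obtain ⟨z, hz1, hz2, hwz⟩ := hex
    have h1 : (μ w).1 = w.1 / k := hμ w
    have h2 : (μ z).1 = z.1 / k := hμ z
    rw [hz1] at h2
    have h3 : w.1 / k ≤ z.1 / k := Nat.div_le_div_right (le_of_lt (Fin.lt_def.mp hwz))
    have h4 : f.1 < (μ w).1 := Fin.lt_def.mp hf
    omega
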